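/- arXiv:1912.02144 — 3 statements merged into one kernel-verified Lean document; each statement's English description precedes it below -/
import Mathlib

section
/- Let k be an algebraically closed field and let p, q ∈ k[t] be polynomials such that the k-subalgebra of k[t] generated by p and q is all of k[t], and deg(p) < deg(q). Then either 1 ∈ {deg(p), deg(q)}, or 2 ≤ deg(p) ≤ deg(q) − 2. -/
set_option maxHeartbeats 1000000
set_option synthInstance.maxHeartbeats 1000000

open Polynomial

section Aux

variable {k : Type*} [Field k]

lemma degree_sum_comp_mul_pow (p q : k[X]) (hp : 1 ≤ p.natDegree) (hq : q ≠ 0)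
    (hco : Nat.Coprime q.natDegree p.natDegree)
    (g : Fin p.natDegree → k[X]) (hg : ∃ i, g i ≠ 0) :
    ∃ i, g i ≠ 0 ∧ (∑ j, (g j).comp p * q ^ (j : ℕ)).degree =
      ((q.natDegree * i + (g i).natDegree * p.natDegree : ℕ) : WithBot ℕ) := by
  classical
  set d : Fin p.natDegree → ℕ :=
    fun i => q.natDegree * i + (g i).natDegree * p.natDegree with hd
  set t : Fin p.natDegree → k[X] := fun j => (g j).comp p * q ^ (j : ℕ) with ht
  have hp0 : p ≠ 0 := fun h => by
    have : p.natDegree = 0 := by rw [h]; simp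
    omega
  have hcomp : ∀ j, g j ≠ 0 → (g j).comp p ≠ 0 := by
    intro j hj hc
    rcases comp_eq_zero_iff.mp hc with h | ⟨_, h⟩
    · exact hj h
    · have : p.natDegree = 0 := by rw [h]; simp
      omega
  have htdeg : ∀ j, g j ≠ 0 → (t j).degree = (d j : WithBot ℕ) := by
    intro j hj
    rw [ht, hd]
    simp only
    rw [degree_mul, degree_pow, degree_eq_natDegree (hcomp j hj), degree_eq_natDegree hq,
      natDegree_comp]
    push_cast
    ring
  set S : Finset (Fin p.natDegree) := Finset.univ.filter (fun j => g j ≠ 0) with hS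
  have hSne : S.Nonempty := by
    obtain ⟨i, hi⟩ := hg
    exact ⟨i, by simp [hS, hi]⟩
  obtain ⟨i₀, hi₀S, hmax⟩ := S.exists_max_image d hSne
  have hi₀ : g i₀ ≠ 0 := by
    have := hi₀S
    rw [hS, Finset.mem_filter] at this
    exact this.2
  refine ⟨i₀, hi₀, ?_⟩
  have hinj : ∀ j ∈ S, d j = d i₀ → j = i₀ := by
    intro j hjS hdj
    have h1 : (q.natDegree * (j : ℕ)) % p.natDegree
        = (q.natDegree * (i₀ : ℕ)) % p.natDegree := by
      have := congrArg (· % p.natDegree) hdj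
      simpa [hd, Nat.add_mul_mod_self_right] using this
    have h2 : (j : ℕ) % p.natDegree = (i₀ : ℕ) % p.natDegree :=
      Nat.ModEq.cancel_left_of_coprime (by rwa [Nat.coprime_comm] at hco) h1
    exact Fin.ext (by rwa [Nat.mod_eq_of_lt j.isLt, Nat.mod_eq_of_lt i₀.isLt] at h2)
  have hsplit : (∑ j, t j) = t i₀ + ∑ j ∈ Finset.univ.erase i₀, t j :=
    (Finset.add_sum_erase _ t (Finset.mem_univ i₀)).symm
  have hrest : (∑ j ∈ Finset.univ.erase i₀, t j).degree < ((d i₀ : ℕ) : WithBot ℕ) := by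
    refine lt_of_le_of_lt (degree_sum_le _ _) ?_
    rw [Finset.sup_lt_iff (by exact WithBot.bot_lt_coe _)]
    intro j hj
    by_cases hgj : g j = 0
    · have : t j = 0 := by rw [ht]; simp [hgj]
      rw [this, degree_zero]
      exact WithBot.bot_lt_coe _
    · rw [htdeg j hgj]
      have hjS : j ∈ S := by simp [hS, hgj]
      have hne : j ≠ i₀ := (Finset.mem_erase.mp hj).1
      have hlt : d j < d i₀ :=
        lt_of_le_of_ne (hmax j hjS) (fun h => hne (hinj j hjS h))
      exact_mod_cast hlt
  calc (∑ j, t j).degree = (t i₀ + ∑ j ∈ Finset.univ.erase i₀, t j).degree := by rw [hsplit]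
    _ = (t i₀).degree := degree_add_eq_left_of_degree_lt (by rw [htdeg i₀ hi₀]; exact hrest)
    _ = _ := htdeg i₀ hi₀

lemma span_pow_X_top (p : k[X]) (hp : 1 ≤ p.natDegree) :
    ∀ f : k[X], f ∈ Submodule.span (Algebra.adjoin k ({p} : Set k[X]))
      (Set.range fun i : Fin p.natDegree => (X : k[X]) ^ (i : ℕ)) := by
  classical
  set R := Algebra.adjoin k ({p} : Set k[X])
  set N := Submodule.span R (Set.range fun i : Fin p.natDegree => (X : k[X]) ^ (i : ℕ)) with hN
  have hp0 : p ≠ 0 := fun h => by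
    have : p.natDegree = 0 := by rw [h]; simp
    omega
  have key : ∀ D : ℕ, ∀ f : k[X], f.natDegree = D → f ∈ N := by
    intro D
    induction D using Nat.strong_induction_on with
    | _ D IH =>
      intro f hfD
      by_cases hf0 : f = 0
      · simp [hf0]
      · set a := D / p.natDegree with ha
        set i := D % p.natDegree with hi
        have hiLt : i < p.natDegree := Nat.mod_lt _ (by omega)
        set c : k := f.leadingCoeff / p.leadingCoeff ^ a with hc
        have hc0 : c ≠ 0 := by
          apply div_ne_zero (leadingCoeff_ne_zero.mpr hf0)
          exact pow_ne_zero _ (leadingCoeff_ne_zero.mpr hp0)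
        set r : k[X] := C c * p ^ a with hr
        have hrR : r ∈ R := by
          exact mul_mem (Subalgebra.algebraMap_mem R c)
            (pow_mem (Algebra.self_mem_adjoin_singleton k p) a)
        set term : k[X] := r * X ^ i with hterm
        have htermN : term ∈ N := by
          have : term = (⟨r, hrR⟩ : R) • ((X : k[X]) ^ i) := by
            rw [hterm, Algebra.smul_def]
            rfl
          rw [this]
          exact Submodule.smul_mem _ _
            (Submodule.subset_span ⟨⟨i, hiLt⟩, rfl⟩)
        have hr0 : r ≠ 0 := mul_ne_zero (by simpa using hc0) (pow_ne_zero _ hp0)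
        have hterm0 : term ≠ 0 := mul_ne_zero hr0 (pow_ne_zero _ X_ne_zero)
        have htermdeg : term.natDegree = D := by
          rw [hterm, hr, natDegree_mul (by exact hr0) (pow_ne_zero _ X_ne_zero),
            natDegree_mul (by simpa using hc0) (pow_ne_zero _ hp0)]
          simp [natDegree_pow]
          rw [mul_comm]
          exact Nat.div_add_mod D p.natDegree
        have htermlc : term.leadingCoeff = f.leadingCoeff := by
          rw [hterm, hr, leadingCoeff_mul, leadingCoeff_mul, leadingCoeff_pow,
            leadingCoeff_pow, leadingCoeff_C, leadingCoeff_X, one_pow, mul_one, hc]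
          exact div_mul_cancel₀ _ (pow_ne_zero _ (leadingCoeff_ne_zero.mpr hp0))
        by_cases hft : f = term
        · rw [hft]; exact htermN
        · have hsub : (f - term).degree < f.degree := by
            apply degree_sub_lt _ hf0 htermlc.symm
            rw [degree_eq_natDegree hf0, degree_eq_natDegree hterm0, htermdeg, hfD]
          have hsub0 : f - term ≠ 0 := sub_ne_zero.mpr hft
          have hlt : (f - term).natDegree < D := by
            have := natDegree_lt_natDegree hsub0 hsub
            omega
          have : f - term ∈ N := IH _ hlt _ rfl
          have hfN : f = (f - term) + term := by ring
          rw [hfN]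
          exact add_mem this htermN
  intro f
  exact key f.natDegree f rfl

lemma not_gen (p q : k[X]) (hn : 2 ≤ p.natDegree) (hm : q.natDegree = p.natDegree + 1)
    (hgen : Algebra.adjoin k ({p, q} : Set k[X]) = ⊤) : False := by
  classical
  set R := Algebra.adjoin k ({p} : Set k[X]) with hR
  have hp1 : 1 ≤ p.natDegree := by omega
  have hp0 : p ≠ 0 := fun h => by
    have : p.natDegree = 0 := by rw [h]; simp
    omega
  have hq0 : q ≠ 0 := fun h => by
    have : q.natDegree = 0 := by rw [h]; simp
    omega
  have hrep : ∀ r : R, ∃ g : k[X], g.comp p = (r : k[X]) := by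
    intro r
    have hr : (r : k[X]) ∈ Algebra.adjoin k ({p} : Set k[X]) := r.2
    rw [Algebra.adjoin_singleton_eq_range_aeval] at hr
    obtain ⟨g, hg⟩ := hr
    exact ⟨g, by rwa [comp_eq_aeval]⟩
  -- linear independence of powers of X over R
  have li : LinearIndependent R (fun i : Fin p.natDegree => (X : k[X]) ^ (i : ℕ)) := by
    rw [Fintype.linearIndependent_iff]
    intro c hc
    choose g hg using fun i => hrep (c i)
    by_contra hne
    push_neg at hne
    obtain ⟨i₁, hi₁⟩ := hne
    have hgex : ∃ i, g i ≠ 0 := by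
      refine ⟨i₁, fun h => hi₁ ?_⟩
      have := hg i₁
      rw [h, zero_comp] at this
      exact Subtype.ext this.symm
    obtain ⟨i, hgi, hdeg⟩ := degree_sum_comp_mul_pow p X hp1 X_ne_zero
      (by rw [natDegree_X]; exact Nat.coprime_one_left _) g hgex
    have hsum0 : (∑ j, (g j).comp p * (X : k[X]) ^ (j : ℕ)) = 0 := by
      rw [← hc]
      refine Finset.sum_congr rfl fun j _ => ?_
      rw [hg j, Subalgebra.smul_def, smul_eq_mul]
    rw [hsum0, degree_zero] at hdeg
    exact WithBot.bot_ne_coe hdeg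
  have hspan : ⊤ ≤ Submodule.span R
      (Set.range fun i : Fin p.natDegree => (X : k[X]) ^ (i : ℕ)) :=
    fun f _ => span_pow_X_top p hp1 f
  let b : Module.Basis (Fin p.natDegree) R k[X] := Module.Basis.mk li hspan
  haveI : Module.Finite R k[X] := Module.Finite.of_basis b
  haveI : Module.Free R k[X] := Module.Free.of_basis b
  haveI : Nontrivial R := ⟨⟨0, 1, fun h => by simpa using congrArg Subtype.val h⟩⟩
  set ch := LinearMap.charpoly ((Algebra.lmul R k[X]) q) with hch
  have hmonic : ch.Monic := LinearMap.charpoly_monic _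
  have hchdeg : ch.natDegree = p.natDegree := by
    rw [hch, LinearMap.charpoly_natDegree, Module.finrank_eq_card_basis b, Fintype.card_fin]
  have haeval : Polynomial.aeval q ch = 0 := by
    have hCH := LinearMap.aeval_self_charpoly ((Algebra.lmul R k[X]) q)
    have h2 : (Algebra.lmul R k[X]) (Polynomial.aeval q ch) = 0 := by
      rw [← Polynomial.aeval_algHom_apply]
      exact hCH
    exact Algebra.lmul_injective (h2.trans (map_zero _).symm)
  have hrel : q ^ p.natDegree
      = -∑ i ∈ Finset.range p.natDegree, ch.coeff i • q ^ i := by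
    have hs := Polynomial.aeval_eq_sum_range (p := ch) (x := q)
    rw [haeval, hchdeg, Finset.sum_range_succ] at hs
    have hcoef : ch.coeff p.natDegree = 1 := by
      have := hmonic.coeff_natDegree
      rwa [hchdeg] at this
    rw [hcoef, one_smul] at hs
    exact eq_neg_of_add_eq_zero_right hs.symm
  set N := Submodule.span R (Set.range fun i : Fin p.natDegree => q ^ (i : ℕ)) with hNdef
  have hpow : ∀ j : ℕ, q ^ j ∈ N := by
    intro j
    induction j using Nat.strong_induction_on with
    | _ j IH =>
      by_cases hj : j < p.natDegree
      · exact Submodule.subset_span ⟨⟨j, hj⟩, rfl⟩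
      · push_neg at hj
        have hqj : q ^ j = q ^ (j - p.natDegree) * q ^ p.natDegree := by
          rw [← pow_add]
          congr 1
          omega
        rw [hqj, hrel, mul_neg, Finset.mul_sum]
        refine neg_mem (Submodule.sum_mem _ fun i hi => ?_)
        rw [Finset.mem_range] at hi
        rw [mul_smul_comm, ← pow_add]
        exact Submodule.smul_mem _ _ (IH _ (by omega))
  have honeN : (1 : k[X]) ∈ N := by simpa using hpow 0
  have hmulN : ∀ x y : k[X], x ∈ N → y ∈ N → x * y ∈ N := by
    have h1 : N * N ≤ N := by
      rw [hNdef, Submodule.span_mul_span]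
      refine Submodule.span_le.mpr ?_
      rintro z ⟨x, ⟨i, rfl⟩, y, ⟨j, rfl⟩, rfl⟩
      show q ^ (i : ℕ) * q ^ (j : ℕ) ∈ (N : Set k[X])
      rw [← pow_add]
      exact hpow _
    intro x y hx hy
    exact h1 (Submodule.mul_mem_mul hx hy)
  set S' : Subalgebra R k[X] := N.toSubalgebra honeN hmulN with hS'
  have hXN : X ∈ N := by
    have hq' : q ∈ S' := by
      show q ∈ N
      simpa using hpow 1
    have hle : Algebra.adjoin R ({q} : Set k[X]) ≤ S' :=
      Algebra.adjoin_le (Set.singleton_subset_iff.mpr hq')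
    have hXtop : X ∈ (Algebra.adjoin R ({q} : Set k[X])).restrictScalars k := by
      rw [← Algebra.adjoin_union_eq_adjoin_adjoin]
      have hset : ({p} ∪ {q} : Set k[X]) = {p, q} := by
        rw [Set.singleton_union]
      rw [hset, hgen]
      trivial
    rw [Subalgebra.mem_restrictScalars] at hXtop
    exact hle hXtop
  obtain ⟨c, hc⟩ := (Submodule.mem_span_range_iff_exists_fun R).mp hXN
  choose g hg using fun i => hrep (c i)
  have hgex : ∃ i, g i ≠ 0 := by
    by_contra h
    push_neg at h
    have hc0 : ∀ i, c i = 0 := fun i =>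
      Subtype.ext (by rw [← hg i, h i, zero_comp]; simp)
    simp only [hc0, zero_smul, Finset.sum_const_zero] at hc
    exact X_ne_zero hc.symm
  have hcop : Nat.Coprime q.natDegree p.natDegree := by
    rw [hm, Nat.add_comm, Nat.coprime_add_self_left]
    exact Nat.coprime_one_left _
  obtain ⟨i, hgi, hdeg⟩ := degree_sum_comp_mul_pow p q hp1 hq0 hcop g hgex
  have hsum : (∑ j, (g j).comp p * q ^ (j : ℕ)) = X := by
    rw [← hc]
    refine Finset.sum_congr rfl fun j _ => ?_
    rw [hg j, Subalgebra.smul_def, smul_eq_mul]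
  rw [hsum, degree_X] at hdeg
  have h1 : (1 : ℕ) = q.natDegree * (i : ℕ) + (g i).natDegree * p.natDegree := by
    exact_mod_cast hdeg
  by_cases hi0 : (i : ℕ) = 0
  · rw [hi0, Nat.mul_zero, Nat.zero_add] at h1
    have : p.natDegree ∣ 1 := Dvd.intro_left _ h1.symm
    have := Nat.dvd_one.mp this
    omega
  · have : q.natDegree ≤ q.natDegree * (i : ℕ) :=
      Nat.le_mul_of_pos_right _ (by omega)
    omega

end Aux

theorem stmt8 {k : Type*} [Field k] [IsAlgClosed k] (p q : Polynomial k)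
    (hgen : Algebra.adjoin k ({p, q} : Set (Polynomial k)) = ⊤)
    (hdeg : p.degree < q.degree) :
    p.degree = 1 ∨ q.degree = 1 ∨ (2 ≤ p.degree ∧ p.degree + 2 ≤ q.degree) := by
  rcases le_or_gt p.degree 0 with h0 | hpos
  · -- p is a constant, so q alone generates
    right; left
    obtain ⟨c, rfl⟩ : ∃ c, p = C c := ⟨p.coeff 0, eq_C_of_degree_le_zero h0⟩
    have hq : Algebra.adjoin k ({q} : Set (Polynomial k)) = ⊤ := by
      apply top_le_iff.mp
      rw [← hgen]
      apply Algebra.adjoin_le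
      intro x hx
      rcases hx with rfl | hx
      · exact Subalgebra.algebraMap_mem _ c
      · exact Algebra.subset_adjoin hx
    have hX : (X : Polynomial k) ∈ Algebra.adjoin k ({q} : Set (Polynomial k)) := by
      rw [hq]; trivial
    rw [Algebra.adjoin_singleton_eq_range_aeval] at hX
    obtain ⟨g, hg⟩ := hX
    have hg2 : g.comp q = X := by rw [comp_eq_aeval]; exact hg
    have h1 : g.natDegree * q.natDegree = 1 := by
      rw [← natDegree_comp, hg2, natDegree_X]
    have hq1 : q.natDegree = 1 := Nat.eq_one_of_mul_eq_one_left h1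
    have hq0 : q ≠ 0 := fun h => by rw [h] at hq1; simp at hq1
    rw [degree_eq_natDegree hq0, hq1]
    rfl
  · -- p is non-constant
    have hp0 : p ≠ 0 := fun h => by rw [h, degree_zero] at hpos; exact absurd hpos (by simp)
    have hq0 : q ≠ 0 := fun h => by
      rw [h, degree_zero] at hdeg
      exact not_lt_bot hdeg
    have hpn : 1 ≤ p.natDegree := by
      rwa [degree_eq_natDegree hp0, ← Nat.cast_zero, Nat.cast_lt] at hpos
    by_cases hp1 : p.natDegree = 1
    · left
      rw [degree_eq_natDegree hp0, hp1]
      rfl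
    · right; right
      have hn2 : 2 ≤ p.natDegree := by omega
      have hlt : p.natDegree < q.natDegree := natDegree_lt_natDegree hp0 hdeg
      have hne : q.natDegree ≠ p.natDegree + 1 := fun h => not_gen p q hn2 h hgen
      have hge : p.natDegree + 2 ≤ q.natDegree := by omega
      constructor
      · rw [degree_eq_natDegree hp0]
        exact_mod_cast hn2
      · rw [degree_eq_natDegree hp0, degree_eq_natDegree hq0]
        exact_mod_cast hge
end

section
/- Let k be an algebraically closed field of characteristic p > 0. (1) For every invertible 3×3 matrix A over k there exist a nonzero vector v ∈ k³ and a nonzero scalar μ ∈ k such that A · v^(p) = μ·v, where v^(p) denotes the vector obtained by raising each coordinate of v to the p-th power. (2) For every invertible 3×3 matrix B over k there exist a nonzero vector v ∈ k³ and a nonzero scalar μ ∈ k such that (B·v)^(p) = μ·v. -/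
open Polynomial Finset

-- coeff of p-th power in char p
theorem coeff_pow_char' {k : Type*} [Field k] {p : ℕ} (hp : Nat.Prime p) [CharP k p]
    (r : k[X]) (j : ℕ) :
    (r ^ p).coeff j = (if p ∣ j then r.coeff (j / p) else 0) ^ p := by
  haveI : Fact p.Prime := ⟨hp⟩
  rw [← Polynomial.map_frobenius_expand p r, Polynomial.coeff_map, Polynomial.coeff_expand hp.pos]
  rcases em (p ∣ j) with h | h <;> simp [h, frobenius_def]

theorem key {k : Type*} [Field k] [IsAlgClosed k] {p : ℕ} (hp : Nat.Prime p) [CharP k p]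
    {V : Type*} [AddCommGroup V] [Module k V] [Module.Finite k V]
    (φ : V →+ V) (hsmul : ∀ (c : k) (v : V), φ (c • v) = c ^ p • φ v)
    (hinj : Function.Injective φ) (v0 : V) (hv0 : v0 ≠ 0) :
    ∃ v : V, v ≠ 0 ∧ φ v = v := by
  classical
  haveI : Fact p.Prime := ⟨hp⟩
  have hp2 : 2 ≤ p := hp.two_le
  set f : ℕ → V := fun i => (⇑φ)^[i] v0 with hf
  have hfs : ∀ i, f (i + 1) = φ (f i) := fun i => Function.iterate_succ_apply' (⇑φ) i v0
  have hf0 : f 0 = v0 := rfl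
  -- snoc helper
  have snoc_eq : ∀ m : ℕ, (fun i : Fin (m + 1) => f i) =
      Fin.snoc (fun i : Fin m => f i) (f m) := by
    intro m
    funext i
    refine Fin.lastCases ?_ (fun j => ?_) i
    · simp [Fin.snoc_last]
    · simp [Fin.snoc_castSucc]
  have hex : ∃ m, ¬ LinearIndependent k (fun i : Fin m => f i) := by
    refine ⟨Module.finrank k V + 1, fun h => ?_⟩
    have := h.fintype_card_le_finrank
    simp [Fintype.card_fin] at this
  have hNdep := Nat.find_spec hex
  have hmin : ∀ m < Nat.find hex, LinearIndependent k (fun i : Fin m => f i) :=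
    fun m hm => not_not.1 (Nat.find_min hex hm)
  have hL1 : LinearIndependent k (fun i : Fin 1 => f i) :=
    LinearIndependent.of_subsingleton 0 hv0
  have hN1 : 1 < Nat.find hex := by
    rw [Nat.lt_find_iff]
    intro n hn
    rw [not_not]
    interval_cases n
    · exact linearIndependent_empty_type
    · exact hL1
  obtain ⟨m, hm⟩ : ∃ m, Nat.find hex = m + 1 + 1 := ⟨Nat.find hex - 2, by omega⟩
  have hindep : LinearIndependent k (fun i : Fin (m + 1) => f i) := hmin _ (by omega)
  have hmem : f (m + 1) ∈ Submodule.span k (Set.range fun i : Fin (m + 1) => f i) := by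
    by_contra hmem
    rw [hm] at hNdep
    exact hNdep (by rw [snoc_eq (m + 1)]; exact linearIndependent_fin_snoc.2 ⟨hindep, hmem⟩)
  obtain ⟨a, ha⟩ := (Submodule.mem_span_range_iff_exists_fun k).1 hmem
  set A : ℕ → k := fun i => if h : i < m + 1 then a ⟨i, h⟩ else 0 with hA
  have ha' : ∑ i ∈ range (m + 1), A i • f i = f (m + 1) := by
    rw [← ha, ← Fin.sum_univ_eq_sum_range (fun i => A i • f i)]
    refine Finset.sum_congr rfl fun i _ => ?_
    simp [hA, i.isLt, Nat.le_of_lt_succ i.isLt]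
  -- A 0 ≠ 0
  have ha0 : A 0 ≠ 0 := by
    intro h0
    choose b hb using fun i : Fin m => IsAlgClosed.exists_pow_nat_eq (A (i + 1)) hp.pos
    have h1 : φ (∑ i : Fin m, b i • f i) = φ (f m) := by
      rw [map_sum, ← hfs]
      rw [← ha', Finset.sum_range_succ']
      have : A 0 • f 0 = 0 := by rw [h0, zero_smul]
      rw [this, add_zero, ← Fin.sum_univ_eq_sum_range (fun i => A (i + 1) • f (i + 1))]
      refine Finset.sum_congr rfl fun i _ => ?_
      rw [hsmul, hb, hfs]
    have h2 : f m = ∑ i : Fin m, b i • f i := (hinj h1).symm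
    have h3 : f m ∈ Submodule.span k (Set.range fun i : Fin m => f i) := by
      rw [h2]
      exact Submodule.sum_mem _ fun i _ =>
        Submodule.smul_mem _ _ (Submodule.subset_span ⟨i, rfl⟩)
    have := (linearIndependent_fin_snoc.1 (by rw [← snoc_eq m]; exact hindep)).2
    exact this h3
  -- polynomials
  set q : ℕ → k[X] := fun i =>
    Nat.rec (C (A 0) * X ^ p) (fun i qi => qi ^ p + C (A (i + 1)) * X ^ p) i with hqdef
  have hq0 : q 0 = C (A 0) * X ^ p := rfl
  have hqs : ∀ i, q (i + 1) = q i ^ p + C (A (i + 1)) * X ^ p := fun i => rfl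
  have hpow : ∀ i : ℕ, 2 ≤ p ^ (i + 1) := fun i =>
    le_trans hp2 (Nat.le_self_pow (by omega) p)
  have hq : ∀ i, (q i).coeff 0 = 0 ∧ (q i).coeff 1 = 0 ∧
      (q i).natDegree ≤ p ^ (i + 1) ∧ (q i).coeff (p ^ (i + 1)) = (A 0) ^ (p ^ i) := by
    intro i
    induction i with
    | zero =>
      refine ⟨?_, ?_, ?_, ?_⟩
      · rw [hq0, coeff_C_mul, coeff_X_pow, if_neg (by omega : ¬ (0 = p)), mul_zero]
      · rw [hq0, coeff_C_mul, coeff_X_pow, if_neg (by omega : ¬ (1 = p)), mul_zero]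
      · rw [hq0, pow_one]; exact natDegree_C_mul_X_pow_le (A 0) p
      · simp [hq0, coeff_X_pow, pow_one, pow_zero]
    | succ i ih =>
      obtain ⟨ih0, ih1, ihd, iht⟩ := ih
      have hnd1 : ¬ p ∣ 1 := fun h => by
        have := Nat.le_of_dvd one_pos h; omega
      refine ⟨?_, ?_, ?_, ?_⟩
      · rw [hqs, coeff_add, coeff_pow_char' hp, if_pos (dvd_zero p), Nat.zero_div, ih0,
          zero_pow hp.ne_zero, coeff_C_mul, coeff_X_pow, if_neg (by omega : ¬ (0 = p))]
        ring
      · rw [hqs, coeff_add, coeff_pow_char' hp, if_neg hnd1, zero_pow hp.ne_zero,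
          coeff_C_mul, coeff_X_pow, if_neg (by omega : ¬ (1 = p))]
        ring
      · rw [hqs]
        refine le_trans (natDegree_add_le _ _) (max_le ?_ ?_)
        · rw [natDegree_pow, pow_succ, pow_succ]
          calc p * (q i).natDegree ≤ p * p ^ (i+1) := Nat.mul_le_mul_left p ihd
          _ = p ^ (i+1) * p := by ring
        · refine le_trans (natDegree_C_mul_X_pow_le (A (i+1)) p) ?_
          calc p = p ^ 1 := (pow_one p).symm
          _ ≤ p ^ (i + 2) := Nat.pow_le_pow_right (by omega) (by omega)
      · have hplt : p < p ^ (i + 2) := by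
          calc p = p ^ 1 := (pow_one p).symm
          _ < p ^ (i + 2) := Nat.pow_lt_pow_right hp.one_lt (by omega)
        rw [hqs, coeff_add, coeff_pow_char' hp, if_pos ⟨p ^ (i + 1), by ring⟩,
          coeff_C_mul, coeff_X_pow, if_neg (by omega : ¬ (p ^ (i + 2) = p))]
        rw [(by rw [pow_succ]; exact Nat.mul_div_cancel _ hp.pos :
          p ^ (i + 2) / p = p ^ (i + 1))]
        rw [iht, ← pow_mul, pow_succ]
        ring
  -- the polynomial P and its root
  set P : k[X] := q m - X with hPdef
  have hP1 : P.coeff 1 = -1 := by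
    rw [hPdef, coeff_sub, (hq m).2.1, coeff_X_one]; ring
  have hPtop : P.coeff (p ^ (m + 1)) = (A 0) ^ (p ^ m) := by
    rw [hPdef, coeff_sub, coeff_X, if_neg (by have := hpow m; omega : ¬ (1 = p ^ (m+1))),
      (hq m).2.2.2, sub_zero]
  have hPne : P ≠ 0 := fun h => by simp [h] at hP1
  have hPdeg : 2 ≤ P.natDegree := by
    have h1 : p ^ (m + 1) ≤ P.natDegree :=
      le_natDegree_of_ne_zero (by rw [hPtop]; exact pow_ne_zero _ ha0)
    have := hpow m; omega
  have hP0 : P.eval 0 = 0 := by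
    rw [← coeff_zero_eq_eval_zero, hPdef, coeff_sub, (hq m).1, coeff_X,
      if_neg (by omega : ¬ ((1:ℕ) = 0))]
    ring
  set Q : k[X] := P /ₘ X with hQdef
  have hPQ : X * Q = P := by
    have h := modByMonic_add_div P (X : k[X])
    rwa [modByMonic_X, hP0, map_zero, zero_add] at h
  have hQc0 : Q.coeff 0 = -1 := by
    have := coeff_X_mul Q 0
    rw [hPQ] at this
    rw [← this, hP1]
  have hQne : Q ≠ 0 := fun h => by simp [h] at hQc0
  have hQdeg : 1 ≤ Q.natDegree := by
    rw [hQdef, natDegree_divByMonic P (monic_X (R := k)), natDegree_X]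
    omega
  obtain ⟨t, ht⟩ := IsAlgClosed.exists_root Q
    (by
      have : 0 < Q.degree := natDegree_pos_iff_degree_pos.1 (by omega)
      exact this.ne')
  have htne : t ≠ 0 := by
    intro h
    rw [h] at ht
    rw [Polynomial.IsRoot, ← coeff_zero_eq_eval_zero, hQc0] at ht
    exact (by norm_num : ((-1 : k)) ≠ 0) ht
  have htP : P.eval t = 0 := by
    rw [← hPQ, eval_mul, ht.eq_zero, mul_zero]
  have htq : (q m).eval t = t := by
    rw [hPdef] at htP
    rw [eval_sub, eval_X, sub_eq_zero] at htP
    exact htP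
  -- the eigenvector
  set c : ℕ → k := fun i => (q i).eval t with hcdef
  have hc0 : c 0 = A 0 * t ^ p := by simp [hcdef, hq0]
  have hcs : ∀ i, c (i + 1) = (c i) ^ p + A (i + 1) * t ^ p := fun i => by
    simp [hcdef, hqs i]
  have hcm : c m = t := htq
  refine ⟨∑ i ∈ range (m + 1), c i • f i, ?_, ?_⟩
  · intro h
    rw [← Fin.sum_univ_eq_sum_range (fun i => c i • f i)] at h
    have := Fintype.linearIndependent_iff.1 hindep (fun i : Fin (m+1) => c i) h
      ⟨m, by omega⟩
    rw [hcm] at this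
    exact htne this
  · rw [map_sum]
    have step : ∀ i, φ (c i • f i) = (c i) ^ p • f (i + 1) := fun i => by
      rw [hsmul, hfs]
    simp only [step]
    rw [Finset.sum_range_succ, hcm, ← ha', Finset.smul_sum]
    rw [Finset.sum_range_succ' (fun j => t ^ p • (A j • f j)) m]
    rw [Finset.sum_range_succ' (fun i => c i • f i) m]
    rw [← add_assoc, ← Finset.sum_add_distrib]
    congr 1
    · refine Finset.sum_congr rfl fun i _ => ?_
      rw [smul_smul, ← add_smul, hcs i]
      ring_nf
    · rw [smul_smul, hc0, hf0]
      ring_nf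

theorem stmt14 {k : Type*} [Field k] [IsAlgClosed k] (p : ℕ) [CharP k p]
    (hp : 0 < p) :
    (∀ A : Matrix (Fin 3) (Fin 3) k, IsUnit A.det →
      ∃ (v : Fin 3 → k) (mu : k), v ≠ 0 ∧ mu ≠ 0 ∧
        A.mulVec (fun i => v i ^ p) = mu • v) ∧
    (∀ B : Matrix (Fin 3) (Fin 3) k, IsUnit B.det →
      ∃ (v : Fin 3 → k) (mu : k), v ≠ 0 ∧ mu ≠ 0 ∧
        (fun i => (B.mulVec v) i ^ p) = mu • v) := by
  have hprime : p.Prime := (CharP.char_is_prime_or_zero k p).resolve_right (by omega)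
  haveI : Fact p.Prime := ⟨hprime⟩
  have hpinj : Function.Injective (fun x : k => x ^ p) := by
    intro x y hxy
    have := frobenius_inj k p
    apply this
    simpa [frobenius_def] using hxy
  have hv0 : (fun _ : Fin 3 => (1 : k)) ≠ 0 := by
    intro h
    have := congrFun h 0
    simp at this
  constructor
  · intro A hA
    set φ : (Fin 3 → k) →+ (Fin 3 → k) :=
      AddMonoidHom.mk' (fun v => A.mulVec (fun i => v i ^ p)) (by
        intro u v
        show A.mulVec (fun i => (u + v) i ^ p) = A.mulVec _ + A.mulVec _
        have : (fun i => (u + v) i ^ p) = (fun i => u i ^ p) + (fun i => v i ^ p) := by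
          funext i
          simp [add_pow_char]
        rw [this, Matrix.mulVec_add]) with hφ
    have hsmul : ∀ (c : k) (v : Fin 3 → k), φ (c • v) = c ^ p • φ v := by
      intro c v
      show A.mulVec (fun i => (c • v) i ^ p) = c ^ p • A.mulVec (fun i => v i ^ p)
      have : (fun i => (c • v) i ^ p) = c ^ p • (fun i => v i ^ p) := by
        funext i
        simp [mul_pow]
      rw [this, Matrix.mulVec_smul]
    have hinj : Function.Injective φ := by
      intro u v huv
      have h1 : A.mulVec (fun i => u i ^ p) = A.mulVec (fun i => v i ^ p) := huv
      have h2 : (fun i => u i ^ p) = (fun i => v i ^ p) := by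
        have := congrArg (A⁻¹.mulVec) h1
        rwa [Matrix.mulVec_mulVec, Matrix.mulVec_mulVec, Matrix.nonsing_inv_mul A hA,
          Matrix.one_mulVec, Matrix.one_mulVec] at this
      funext i
      exact hpinj (congrFun h2 i)
    obtain ⟨ψ, hψ, hsmul', hinj'⟩ : ∃ ψ : (Fin 3 → k) →+ (Fin 3 → k),
        ⇑ψ = (fun v => A.mulVec fun i => v i ^ p) ∧
        (∀ (c : k) (v : Fin 3 → k), ψ (c • v) = c ^ p • ψ v) ∧
        Function.Injective ψ := ⟨φ, rfl, hsmul, hinj⟩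
    obtain ⟨v, hvne, hv⟩ := key (k := k) (V := Fin 3 → k) hprime ψ hsmul' hinj' (fun _ => (1:k)) hv0
    refine ⟨v, 1, hvne, one_ne_zero, ?_⟩
    have hv' : ψ v = A.mulVec fun i => v i ^ p := by rw [hψ]
    rw [one_smul, ← hv', hv]
  · intro B hB
    set φ : (Fin 3 → k) →+ (Fin 3 → k) :=
      AddMonoidHom.mk' (fun v => fun i => (B.mulVec v) i ^ p) (by
        intro u v
        show (fun i => (B.mulVec (u + v)) i ^ p) =
          (fun i => (B.mulVec u) i ^ p) + (fun i => (B.mulVec v) i ^ p)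
        funext i
        simp [Matrix.mulVec_add, add_pow_char]) with hφ
    have hsmul : ∀ (c : k) (v : Fin 3 → k), φ (c • v) = c ^ p • φ v := by
      intro c v
      show (fun i => (B.mulVec (c • v)) i ^ p) = c ^ p • fun i => (B.mulVec v) i ^ p
      funext i
      rw [Matrix.mulVec_smul]
      simp [mul_pow]
    have hinj : Function.Injective φ := by
      intro u v huv
      have h1 : (fun i => (B.mulVec u) i ^ p) = (fun i => (B.mulVec v) i ^ p) := huv
      have h2 : B.mulVec u = B.mulVec v := funext fun i => hpinj (congrFun h1 i)
      have := congrArg (B⁻¹.mulVec) h2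
      rwa [Matrix.mulVec_mulVec, Matrix.mulVec_mulVec, Matrix.nonsing_inv_mul B hB,
        Matrix.one_mulVec, Matrix.one_mulVec] at this
    obtain ⟨ψ, hψ, hsmul', hinj'⟩ : ∃ ψ : (Fin 3 → k) →+ (Fin 3 → k),
        ⇑ψ = (fun v => fun i => (B.mulVec v) i ^ p) ∧
        (∀ (c : k) (v : Fin 3 → k), ψ (c • v) = c ^ p • ψ v) ∧
        Function.Injective ψ := ⟨φ, rfl, hsmul, hinj⟩
    obtain ⟨v, hvne, hv⟩ := key (k := k) (V := Fin 3 → k) hprime ψ hsmul' hinj' (fun _ => (1:k)) hv0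
    refine ⟨v, 1, hvne, one_ne_zero, ?_⟩
    have hv' : ψ v = fun i => (B.mulVec v) i ^ p := by rw [hψ]
    rw [one_smul, ← hv', hv]
end

section
/- Let k be an algebraically closed field and f₁,…,fₙ ∈ k[x₁,…,xₙ]. Then the determinant of the Jacobian matrix (∂fᵢ/∂xⱼ)ᵢⱼ is a nonzero constant if and only if for every λ₀ ∈ k and every (λ₁,…,λₙ) ∈ kⁿ ∖ {0}, the polynomial g = λ₀ + λ₁f₁ + ⋯ + λₙfₙ and its partial derivatives ∂g/∂x₁, …, ∂g/∂xₙ have no common zero in kⁿ. -/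
open MvPolynomial

/-- A unit of a multivariate polynomial ring over a domain is a constant. -/
lemma isUnit_eq_C {R : Type*} [CommRing R] [IsDomain R] :
    ∀ (n : ℕ) (p : MvPolynomial (Fin n) R), IsUnit p → ∃ c : R, IsUnit c ∧ p = C c := by
  intro n
  induction n with
  | zero =>
    intro p hp
    refine ⟨constantCoeff p, ?_, eq_C_of_isEmpty p⟩
    exact hp.map (constantCoeff (σ := Fin 0))
  | succ m ih =>
    intro p hp
    have hq : IsUnit (finSuccEquiv R m p) := hp.map (finSuccEquiv R m)
    obtain ⟨r, hr, hrq⟩ := Polynomial.isUnit_iff.mp hq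
    obtain ⟨c, hc, rfl⟩ := ih r hr
    refine ⟨c, hc, ?_⟩
    apply (finSuccEquiv R m).injective
    rw [← hrq]
    simp [finSuccEquiv_apply]

/-- Weak Nullstellensatz consequence: a polynomial with no zeros is a unit. -/
lemma isUnit_of_no_zero {k : Type*} [Field k] [IsAlgClosed k] {n : ℕ}
    (p : MvPolynomial (Fin n) k) (h : ∀ a : Fin n → k, eval a p ≠ 0) : IsUnit p := by
  rw [← Ideal.span_singleton_eq_top (α := MvPolynomial (Fin n) k)]
  rw [← Ideal.radical_eq_top, ← vanishingIdeal_zeroLocus_eq_radical (K := k)]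
  have hz : zeroLocus k (Ideal.span {p}) = (∅ : Set (Fin n → k)) := by
    ext x
    simp only [mem_zeroLocus_iff, Set.mem_empty_iff_false, iff_false, not_forall]
    exact ⟨p, Ideal.mem_span_singleton_self p, by simpa [coe_aeval_eq_eval] using h x⟩
  rw [hz, vanishingIdeal_empty]

theorem stmt15 {k : Type*} [Field k] [IsAlgClosed k] (n : ℕ)
    (f : Fin n → MvPolynomial (Fin n) k) :
    ((∃ c : k, c ≠ 0 ∧
        (Matrix.of fun i j => pderiv j (f i)).det = C c) ↔
      (∀ (l0 : k) (l : Fin n → k), l ≠ 0 →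
        ¬∃ a : Fin n → k,
          eval a (C l0 + ∑ i, C (l i) * f i) = 0 ∧
          ∀ j, eval a (pderiv j (C l0 + ∑ i, C (l i) * f i)) = 0)) := by
  have key : ∀ (a : Fin n → k) (l : Fin n → k) (l0 : k) (j : Fin n),
      eval a (pderiv j (C l0 + ∑ i, C (l i) * f i)) =
        (Matrix.vecMul l ((Matrix.of fun i j => pderiv j (f i)).map (eval a))) j := by
    intro a l l0 j
    simp [Matrix.vecMul, dotProduct, Matrix.map, map_sum, pderiv_C_mul,
      mul_comm]
  constructor
  · rintro ⟨c, hc, hdet⟩ l0 l hl ⟨a, _, hd⟩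
    have hMdet : ((Matrix.of fun i j => pderiv j (f i)).map (eval a)).det = c := by
      rw [show ((Matrix.of fun i j => pderiv j (f i)).map (eval a)) = (eval a : MvPolynomial (Fin n) k →+* k).mapMatrix (Matrix.of fun i j => pderiv j (f i)) from rfl, ← RingHom.map_det, hdet, eval_C]
    have : ∃ v ≠ 0, Matrix.vecMul v ((Matrix.of fun i j => pderiv j (f i)).map (eval a)) = 0 := by
      refine ⟨l, hl, ?_⟩
      funext j
      rw [Pi.zero_apply, ← key a l l0 j, hd j]
    rw [Matrix.exists_vecMul_eq_zero_iff] at this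
    exact hc (hMdet ▸ this)
  · intro h
    by_contra hne
    -- the Jacobian determinant has a zero
    have hzero : ∃ a : Fin n → k, eval a (Matrix.of fun i j => pderiv j (f i)).det = 0 := by
      by_contra hz
      push_neg at hz
      obtain ⟨c, hcu, hceq⟩ := isUnit_eq_C n _ (isUnit_of_no_zero _ hz)
      exact hne ⟨c, hcu.ne_zero, hceq⟩
    obtain ⟨a, ha⟩ := hzero
    have hMdet : ((Matrix.of fun i j => pderiv j (f i)).map (eval a)).det = 0 := by
      rw [show ((Matrix.of fun i j => pderiv j (f i)).map (eval a)) = (eval a : MvPolynomial (Fin n) k →+* k).mapMatrix (Matrix.of fun i j => pderiv j (f i)) from rfl, ← RingHom.map_det, ha]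
    obtain ⟨l, hl, hlM⟩ := Matrix.exists_vecMul_eq_zero_iff.mpr hMdet
    refine h (-eval a (∑ i, C (l i) * f i)) l hl ⟨a, ?_, ?_⟩
    · simp
    · intro j
      rw [key a l _ j, hlM, Pi.zero_apply]
end
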